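/- The form c(X,Y) = (1/4) Tr(ε[ε,X][ε,Y]) satisfies the Lie algebra 2-cocycle identity: c([X,Y],Z) + c([Y,Z],X) + c([Z,X],Y) = 0 for all bounded X, Y, Z with [ε,X], [ε,Y], [ε,Z] Hilbert–Schmidt. -/

import Mathlib

/-- Hilbert–Schmidt operators: `∑ ‖T e_i‖²` converges for every Hilbert basis. -/
def IsHilbertSchmidt {H : Type*} [NormedAddCommGroup H] [InnerProductSpace ℂ H]
    [CompleteSpace H] (T : H →L[ℂ] H) : Prop :=
  ∀ (ι : Type) (b : HilbertBasis ι ℂ H), Summable fun i => ‖T (b i)‖ ^ 2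

/-- The trace of an operator computed along a Hilbert basis `b`. -/
noncomputable def traceAlong {H : Type*} [NormedAddCommGroup H]
    [InnerProductSpace ℂ H] [CompleteSpace H] {ι : Type}
    (b : HilbertBasis ι ℂ H) (T : H →L[ℂ] H) : ℂ :=
  ∑' i, inner (𝕜 := ℂ) (b i) (T (b i))

/-- The cocycle `c(X,Y) = (1/4) Tr(ε[ε,X][ε,Y])`, trace along the basis `b`. -/
noncomputable def resCocycle {H : Type*} [NormedAddCommGroup H]
    [InnerProductSpace ℂ H] [CompleteSpace H] {ι : Type}
    (b : HilbertBasis ι ℂ H) (ε X Y : H →L[ℂ] H) : ℂ :=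
  (1 / 4 : ℂ) * traceAlong b (ε * (ε * X - X * ε) * (ε * Y - Y * ε))

open ContinuousLinearMap

namespace Stmt8Aux

variable {H : Type*} [NormedAddCommGroup H] [InnerProductSpace ℂ H]
  [CompleteSpace H] {ι : Type} (b : HilbertBasis ι ℂ H)

local notation "⟪" x ", " y "⟫" => inner (𝕜 := ℂ) x y

/-- HS along the fixed basis b. -/
def HSb (T : H →L[ℂ] H) : Prop := Summable fun i => ‖T (b i)‖ ^ 2

lemma hasSum_parseval (x : H) :
    HasSum (fun i => ‖⟪b i, x⟫‖ ^ 2) (‖x‖ ^ 2) := by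
  have h := b.hasSum_inner_mul_inner x x
  have h2 : ∀ i, ⟪x, b i⟫ * ⟪b i, x⟫ = ((‖⟪b i, x⟫‖ ^ 2 : ℝ) : ℂ) := by
    intro i
    rw [← inner_conj_symm x (b i), RCLike.conj_mul]
    push_cast
    rfl
  simp only [h2] at h
  rw [inner_self_eq_norm_sq_to_K] at h
  refine Complex.hasSum_ofReal.mp ?_
  convert h using 2
  push_cast
  rfl
  push_cast
  rfl

lemma summable_parseval (x : H) : Summable fun i => ‖⟪b i, x⟫‖ ^ 2 :=
  (hasSum_parseval b x).summable

lemma tsum_parseval (x : H) : ∑' i, ‖⟪b i, x⟫‖ ^ 2 = ‖x‖ ^ 2 :=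
  (hasSum_parseval b x).tsum_eq

lemma hs_entries {T : H →L[ℂ] H} (h : HSb b T) :
    Summable fun p : ι × ι => ‖⟪b p.1, T (b p.2)⟫‖ ^ 2 := by
  have hcol : ∀ j : ι, Summable (fun i : ι => ‖⟪b i, T (b j)⟫‖ ^ 2) :=
    fun j => summable_parseval b (T (b j))
  have key : ∀ j : ι, (∑' i, ‖⟪b i, T (b j)⟫‖ ^ 2) = ‖T (b j)‖ ^ 2 :=
    fun j => tsum_parseval b (T (b j))
  have hsum : Summable (fun j : ι => ∑' i, ‖⟪b i, T (b j)⟫‖ ^ 2) := by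
    simpa only [key, HSb] using h
  have hsw : Summable fun p : ι × ι => ‖⟪b p.2, T (b p.1)⟫‖ ^ 2 :=
    (summable_prod_of_nonneg (fun p => by positivity)).mpr ⟨hcol, hsum⟩
  have h2 : Summable ((fun p : ι × ι => ‖⟪b p.2, T (b p.1)⟫‖ ^ 2) ∘ (Equiv.prodComm ι ι)) :=
    ((Equiv.prodComm ι ι).summable_iff).mpr hsw
  exact h2

lemma hs_adjoint {T : H →L[ℂ] H} (h : HSb b T) : HSb b (adjoint T) := by
  have he := hs_entries b h
  have h2 := ((summable_prod_of_nonneg (fun p => by positivity)).mp he).2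
  have h3 : ∀ i : ι, (∑' j, ‖⟪b i, T (b j)⟫‖ ^ 2) = ‖adjoint T (b i)‖ ^ 2 := by
    intro i
    rw [← tsum_parseval b (adjoint T (b i))]
    congr 1; funext j
    rw [← adjoint_inner_left T (b j) (b i), ← norm_inner_symm]
  simpa only [h3, HSb] using h2

lemma hs_left (S : H →L[ℂ] H) {T : H →L[ℂ] H} (h : HSb b T) : HSb b (S * T) := by
  refine Summable.of_nonneg_of_le (fun i => by positivity)
    (fun i => ?_) (h.mul_left (‖S‖ ^ 2))
  have : ‖(S * T) (b i)‖ ≤ ‖S‖ * ‖T (b i)‖ := S.le_opNorm _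
  calc ‖(S * T) (b i)‖ ^ 2 ≤ (‖S‖ * ‖T (b i)‖) ^ 2 := by
        exact pow_le_pow_left₀ (norm_nonneg _) this 2
    _ = ‖S‖ ^ 2 * ‖T (b i)‖ ^ 2 := by ring

lemma hs_right (S : H →L[ℂ] H) {T : H →L[ℂ] H} (h : HSb b T) : HSb b (T * S) := by
  have h1 : HSb b (adjoint S * adjoint T) := hs_left b _ (hs_adjoint b h)
  have h2 := hs_adjoint b h1
  have h3 : adjoint (adjoint S * adjoint T) = T * S := by
    have h4 : adjoint S * adjoint T = adjoint S ∘L adjoint T := rfl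
    rw [h4, adjoint_comp, adjoint_adjoint, adjoint_adjoint]
    rfl
  rwa [h3] at h2

lemma summable_diag {A B : H →L[ℂ] H} (hA : HSb b A) (hB : HSb b B) :
    Summable fun i => ⟪b i, (A * B) (b i)⟫ := by
  refine Summable.of_norm ?_
  refine Summable.of_nonneg_of_le (fun i => norm_nonneg _) (fun i => ?_)
    (((hs_adjoint b hA).add hB).div_const 2)
  have h1 : ⟪b i, (A * B) (b i)⟫ = ⟪adjoint A (b i), B (b i)⟫ := by
    rw [adjoint_inner_left]; rfl
  rw [h1]
  calc ‖⟪adjoint A (b i), B (b i)⟫‖ ≤ ‖adjoint A (b i)‖ * ‖B (b i)‖ :=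
        norm_inner_le_norm _ _
    _ ≤ (‖adjoint A (b i)‖ ^ 2 + ‖B (b i)‖ ^ 2) / 2 := by
        nlinarith [sq_nonneg (‖adjoint A (b i)‖ - ‖B (b i)‖)]

lemma trace_eq_double {A B : H →L[ℂ] H} (_hA : HSb b A) (_hB : HSb b B) :
    traceAlong b (A * B) = ∑' i, ∑' j, ⟪b i, A (b j)⟫ * ⟪b j, B (b i)⟫ := by
  unfold traceAlong
  refine tsum_congr fun i => ?_
  have h1 : ⟪b i, (A * B) (b i)⟫ = ⟪adjoint A (b i), B (b i)⟫ := by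
    rw [adjoint_inner_left]; rfl
  rw [h1, ← b.tsum_inner_mul_inner (adjoint A (b i)) (B (b i))]
  refine tsum_congr fun j => ?_
  rw [adjoint_inner_left]

lemma traceAlong_mul_comm {A B : H →L[ℂ] H} (hA : HSb b A) (hB : HSb b B) :
    traceAlong b (A * B) = traceAlong b (B * A) := by
  rw [trace_eq_double b hA hB, trace_eq_double b hB hA]
  have h1 := hs_entries b hA
  have h2' := hs_entries b hB
  have h2 : Summable ((fun p : ι × ι => ‖⟪b p.1, B (b p.2)⟫‖ ^ 2) ∘ (Equiv.prodComm ι ι)) :=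
    ((Equiv.prodComm ι ι).summable_iff).mpr h2'
  have hsummable : Summable (Function.uncurry
      fun i j : ι => ⟪b i, A (b j)⟫ * ⟪b j, B (b i)⟫) := by
    refine Summable.of_norm ?_
    refine Summable.of_nonneg_of_le (fun p => norm_nonneg _) (fun p => ?_)
      ((h1.add h2).div_const 2)
    show ‖⟪b p.1, A (b p.2)⟫ * ⟪b p.2, B (b p.1)⟫‖ ≤ _
    rw [norm_mul]
    have e1 : ((fun p : ι × ι => ‖⟪b p.1, B (b p.2)⟫‖ ^ 2) ∘ (Equiv.prodComm ι ι)) p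
        = ‖⟪b p.2, B (b p.1)⟫‖ ^ 2 := rfl
    rw [e1]
    nlinarith [sq_nonneg (‖⟪b p.1, A (b p.2)⟫‖ - ‖⟪b p.2, B (b p.1)⟫‖),
      norm_nonneg (⟪b p.1, A (b p.2)⟫), norm_nonneg (⟪b p.2, B (b p.1)⟫)]
  have hc := Summable.tsum_comm (f := fun i j : ι => ⟪b i, A (b j)⟫ * ⟪b j, B (b i)⟫) hsummable
  rw [← hc]
  exact tsum_congr fun j => tsum_congr fun i => mul_comm _ _

lemma traceAlong_neg (T : H →L[ℂ] H) : traceAlong b (-T) = -traceAlong b T := by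
  unfold traceAlong
  rw [← tsum_neg]
  exact tsum_congr fun i => by simp [inner_neg_right]

lemma traceAlong_add4 {T1 T2 T3 T4 : H →L[ℂ] H}
    (h1 : Summable fun i => ⟪b i, T1 (b i)⟫)
    (h2 : Summable fun i => ⟪b i, T2 (b i)⟫)
    (h3 : Summable fun i => ⟪b i, T3 (b i)⟫)
    (h4 : Summable fun i => ⟪b i, T4 (b i)⟫) :
    traceAlong b (T1 + T2 - T3 - T4)
      = traceAlong b T1 + traceAlong b T2 - traceAlong b T3 - traceAlong b T4 := by
  unfold traceAlong
  have e : ∀ i, ⟪b i, (T1 + T2 - T3 - T4) (b i)⟫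
      = ⟪b i, T1 (b i)⟫ + ⟪b i, T2 (b i)⟫ - ⟪b i, T3 (b i)⟫ - ⟪b i, T4 (b i)⟫ := by
    intro i
    simp [ContinuousLinearMap.sub_apply, ContinuousLinearMap.add_apply,
      inner_sub_right, inner_add_right]
  rw [tsum_congr e, Summable.tsum_sub (((h1.add h2).sub h3)) h4,
    Summable.tsum_sub (h1.add h2) h3, Summable.tsum_add h1 h2]

lemma key_cycle (ε V : H →L[ℂ] H) {u w : H →L[ℂ] H} (hu : HSb b u) (hw : HSb b w)
    (hcu : ε * u = -(u * ε)) :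
    traceAlong b (ε * u * V * w) = -traceAlong b (ε * V * w * u) := by
  have hA : HSb b (ε * V * w) := hs_left b (ε * V) hw
  have hcu' : u * ε = -(ε * u) := by rw [hcu, neg_neg]
  have h2 : u * (ε * V * w) = -(ε * u * V * w) := by
    calc u * (ε * V * w) = (u * ε) * V * w := by rw [← mul_assoc, ← mul_assoc]
      _ = (-(ε * u)) * V * w := by rw [hcu']
      _ = -(ε * u * V * w) := by simp [neg_mul]
  have h3 : traceAlong b (ε * V * w * u) = -traceAlong b (ε * u * V * w) := by
    rw [traceAlong_mul_comm b hA hu, h2, traceAlong_neg]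
  rw [h3, neg_neg]

lemma anticomm {ε U : H →L[ℂ] H} (hinv : ε * ε = 1) :
    ε * (ε * U - U * ε) = -((ε * U - U * ε) * ε) := by
  have h : ε * (ε * U - U * ε) + (ε * U - U * ε) * ε = ε * ε * U - U * (ε * ε) := by
    noncomm_ring
  rw [hinv, one_mul, mul_one, sub_self] at h
  exact eq_neg_of_add_eq_zero_left h

end Stmt8Aux

open Stmt8Aux in
/-- `c(X,Y) = (1/4) Tr(ε[ε,X][ε,Y])` satisfies the Lie algebra
2-cocycle identity `c([X,Y],Z) + c([Y,Z],X) + c([Z,X],Y) = 0` for bounded `X, Y, Z`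
with Hilbert–Schmidt commutators with `ε`. -/
theorem stmt8 {H : Type*} [NormedAddCommGroup H] [InnerProductSpace ℂ H]
    [CompleteSpace H] {ι : Type} (b : HilbertBasis ι ℂ H)
    (ε X Y Z : H →L[ℂ] H) (hsa : IsSelfAdjoint ε) (hinv : ε * ε = 1)
    (hX : IsHilbertSchmidt (ε * X - X * ε))
    (hY : IsHilbertSchmidt (ε * Y - Y * ε))
    (hZ : IsHilbertSchmidt (ε * Z - Z * ε)) :
    resCocycle b ε (X * Y - Y * X) Z + resCocycle b ε (Y * Z - Z * Y) X +
      resCocycle b ε (Z * X - X * Z) Y = 0 := by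
  have hda : HSb b (ε * X - X * ε) := hX ι b
  have hdb : HSb b (ε * Y - Y * ε) := hY ι b
  have hdc : HSb b (ε * Z - Z * ε) := hZ ι b
  -- expansions of the three cocycle operators
  have expand1 : ε * (ε * (X * Y - Y * X) - (X * Y - Y * X) * ε) * (ε * Z - Z * ε)
      = ε * (ε * X - X * ε) * Y * (ε * Z - Z * ε)
        + ε * X * (ε * Y - Y * ε) * (ε * Z - Z * ε)
        - ε * (ε * Y - Y * ε) * X * (ε * Z - Z * ε)
        - ε * Y * (ε * X - X * ε) * (ε * Z - Z * ε) := by noncomm_ring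
  have expand2 : ε * (ε * (Y * Z - Z * Y) - (Y * Z - Z * Y) * ε) * (ε * X - X * ε)
      = ε * (ε * Y - Y * ε) * Z * (ε * X - X * ε)
        + ε * Y * (ε * Z - Z * ε) * (ε * X - X * ε)
        - ε * (ε * Z - Z * ε) * Y * (ε * X - X * ε)
        - ε * Z * (ε * Y - Y * ε) * (ε * X - X * ε) := by noncomm_ring
  have expand3 : ε * (ε * (Z * X - X * Z) - (Z * X - X * Z) * ε) * (ε * Y - Y * ε)
      = ε * (ε * Z - Z * ε) * X * (ε * Y - Y * ε)
        + ε * Z * (ε * X - X * ε) * (ε * Y - Y * ε)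
        - ε * (ε * X - X * ε) * Z * (ε * Y - Y * ε)
        - ε * X * (ε * Z - Z * ε) * (ε * Y - Y * ε) := by noncomm_ring
  -- summability of each diagonal
  have s_uVw : ∀ (u V w : H →L[ℂ] H), HSb b u → HSb b w →
      Summable fun i => inner (𝕜 := ℂ) (b i) ((ε * u * V * w) (b i)) := by
    intro u V w hu hw
    exact summable_diag b (hs_right b V (hs_left b ε hu)) hw
  have s_Vuw : ∀ (V u w : H →L[ℂ] H), HSb b u → HSb b w →
      Summable fun i => inner (𝕜 := ℂ) (b i) ((ε * V * u * w) (b i)) := by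
    intro V u w hu hw
    exact summable_diag b (hs_left b (ε * V) hu) hw
  -- trace expansions
  have tr1 : traceAlong b (ε * (ε * (X * Y - Y * X) - (X * Y - Y * X) * ε) * (ε * Z - Z * ε))
      = traceAlong b (ε * (ε * X - X * ε) * Y * (ε * Z - Z * ε))
        + traceAlong b (ε * X * (ε * Y - Y * ε) * (ε * Z - Z * ε))
        - traceAlong b (ε * (ε * Y - Y * ε) * X * (ε * Z - Z * ε))
        - traceAlong b (ε * Y * (ε * X - X * ε) * (ε * Z - Z * ε)) := by
    rw [expand1]
    exact traceAlong_add4 b (s_uVw _ _ _ hda hdc) (s_Vuw _ _ _ hdb hdc)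
      (s_uVw _ _ _ hdb hdc) (s_Vuw _ _ _ hda hdc)
  have tr2 : traceAlong b (ε * (ε * (Y * Z - Z * Y) - (Y * Z - Z * Y) * ε) * (ε * X - X * ε))
      = traceAlong b (ε * (ε * Y - Y * ε) * Z * (ε * X - X * ε))
        + traceAlong b (ε * Y * (ε * Z - Z * ε) * (ε * X - X * ε))
        - traceAlong b (ε * (ε * Z - Z * ε) * Y * (ε * X - X * ε))
        - traceAlong b (ε * Z * (ε * Y - Y * ε) * (ε * X - X * ε)) := by
    rw [expand2]
    exact traceAlong_add4 b (s_uVw _ _ _ hdb hda) (s_Vuw _ _ _ hdc hda)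
      (s_uVw _ _ _ hdc hda) (s_Vuw _ _ _ hdb hda)
  have tr3 : traceAlong b (ε * (ε * (Z * X - X * Z) - (Z * X - X * Z) * ε) * (ε * Y - Y * ε))
      = traceAlong b (ε * (ε * Z - Z * ε) * X * (ε * Y - Y * ε))
        + traceAlong b (ε * Z * (ε * X - X * ε) * (ε * Y - Y * ε))
        - traceAlong b (ε * (ε * X - X * ε) * Z * (ε * Y - Y * ε))
        - traceAlong b (ε * X * (ε * Z - Z * ε) * (ε * Y - Y * ε)) := by
    rw [expand3]
    exact traceAlong_add4 b (s_uVw _ _ _ hdc hdb) (s_Vuw _ _ _ hda hdb)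
      (s_uVw _ _ _ hda hdb) (s_Vuw _ _ _ hdc hdb)
  -- the six pairings
  have P1 := key_cycle b ε Y hda hdc (anticomm hinv)
  have P2 := key_cycle b ε X hdc hdb (anticomm hinv)
  have P3 := key_cycle b ε X hdb hdc (anticomm hinv)
  have P4 := key_cycle b ε Y hdc hda (anticomm hinv)
  have P5 := key_cycle b ε Z hdb hda (anticomm hinv)
  have P6 := key_cycle b ε Z hda hdb (anticomm hinv)
  simp only [resCocycle]
  rw [tr1, tr2, tr3, P1, P2, P3, P4, P5, P6]
  ring
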